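/- For all n, m ≥ 2, C_p(n,m) ≥ Σ_{i=1}^{m} Σ_{a_1 + ··· + a_i = n−1, each a_t ≥ 1} (n−1)! / (a_1! ··· a_i!); that is, C_p(n,m) is at least the number of patterns of length n−1 over [m]. -/

import Mathlib

/-- There is an arc (overlap) from `u` to `v`:
`u = a :: w` and `v = w ++ [b]` for some letters `a, b` and word `w`. -/
def Overlap {α : Type*} (u v : List α) : Prop :=
  ∃ (a b : α) (w : List α), u = a :: w ∧ v = w ++ [b]

/-- `p` is a pattern: its set of letters is exactly `{1, ..., k}` for some `k ≥ 1`. -/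
def IsPattern (p : List ℕ) : Prop :=
  ∃ k : ℕ, 1 ≤ k ∧ ∀ x : ℕ, x ∈ p ↔ (1 ≤ x ∧ x ≤ k)

/-- `p` is a pattern all of whose letters lie in `[m] = {1, ..., m}`. -/
def PatternOver (m : ℕ) (p : List ℕ) : Prop :=
  IsPattern p ∧ ∀ x ∈ p, x ≤ m

/-- An `n`-pattern word over `[m]`: a word over `[m]` each of whose
contiguous subwords of length `n` is a pattern. -/
def IsNPatternWord (n m : ℕ) (w : List ℕ) : Prop :=
  (∀ x ∈ w, 1 ≤ x ∧ x ≤ m) ∧ ∀ u : List ℕ, u <:+: w → u.length = n → IsPattern u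

/-- A set `S` of patterns of length `n` over `[m]` is unavoidable if the set of
`n`-pattern words over `[m]` containing no element of `S` as a subword is finite. -/
def UnavoidableP (n m : ℕ) (S : Set (List ℕ)) : Prop :=
  {w : List ℕ | IsNPatternWord n m w ∧ ∀ s ∈ S, ¬ s <:+: w}.Finite

/-- `Tp n m`: the number of conjugacy classes (under cyclic rotation) of
patterns of length `n` over `[m]`. -/
noncomputable def Tp (n m : ℕ) : ℕ :=
  {C : Set (List ℕ) | ∃ p : List ℕ, p.length = n ∧ PatternOver m p ∧
    C = {q : List ℕ | p ~r q}}.ncard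

namespace Stmt13
open List Finset
open scoped Nat

attribute [local instance] Classical.propDecidable

/-- Finset of lists of length `k` with all entries in `s`. -/
def listsOfLen : ℕ → Finset ℕ → Finset (List ℕ)
  | 0, _ => {[]}
  | (k+1), s => s.biUnion fun a => ((listsOfLen k s).image (a :: ·))

lemma mem_listsOfLen {k : ℕ} {s : Finset ℕ} {l : List ℕ} :
    l ∈ listsOfLen k s ↔ l.length = k ∧ ∀ x ∈ l, x ∈ s := by
  induction k generalizing l with
  | zero =>
    simp only [listsOfLen, Finset.mem_singleton]
    constructor
    · rintro rfl; simp
    · rintro ⟨h, -⟩; exact List.eq_nil_of_length_eq_zero h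
  | succ k ih =>
    simp only [listsOfLen, Finset.mem_biUnion, Finset.mem_image]
    constructor
    · rintro ⟨a, ha, q, hq, rfl⟩
      obtain ⟨hl, hm⟩ := ih.1 hq
      refine ⟨by simp [hl], ?_⟩
      intro x hx
      rcases List.mem_cons.1 hx with rfl | hx
      · exact ha
      · exact hm x hx
    · rintro ⟨hl, hm⟩
      cases l with
      | nil => simp at hl
      | cons a q =>
        exact ⟨a, hm a (by simp), q, ih.2 ⟨by simpa using hl, fun x hx => hm x (by simp [hx])⟩, rfl⟩

/-- Multinomial recurrence. -/
lemma multinomial_rec {i : ℕ} (a : Fin i → ℕ) (h : 0 < ∑ t, a t) :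
    Nat.multinomial Finset.univ a
      = ∑ t ∈ Finset.univ.filter (fun t => a t ≠ 0),
          Nat.multinomial Finset.univ (Function.update a t (a t - 1)) := by
  set L := ∑ t, a t with hL
  have hprodpos : 0 < ∏ r, (a r)! := Finset.prod_pos fun r _ => Nat.factorial_pos _
  apply Nat.eq_of_mul_eq_mul_right hprodpos
  rw [mul_comm, Nat.multinomial_spec]
  have key : ∀ t : Fin i, a t ≠ 0 →
      Nat.multinomial Finset.univ (Function.update a t (a t - 1)) * ∏ r, (a r)!
        = a t * (L - 1)! := by
    intro t ht
    have h2 : a t + ∑ x ∈ Finset.univ.erase t, a x = L :=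
      Finset.add_sum_erase _ a (Finset.mem_univ t)
    have hupdsum : ∑ r, Function.update a t (a t - 1) r = L - 1 := by
      rw [Finset.sum_update_of_mem (Finset.mem_univ t), ← Finset.erase_eq]
      omega
    have hprod : ∏ r, (a r)! = a t * ∏ r, (Function.update a t (a t - 1) r)! := by
      rw [← Finset.mul_prod_erase Finset.univ (fun r => (a r)!) (Finset.mem_univ t),
        ← Finset.mul_prod_erase Finset.univ (fun r => (Function.update a t (a t - 1) r)!)
          (Finset.mem_univ t)]
      have h1 : (a t)! = a t * (a t - 1)! := by
        cases' Nat.exists_eq_succ_of_ne_zero ht with c hc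
        rw [hc]; simp [Nat.factorial_succ]
      rw [Function.update_self, h1, mul_assoc]
      congr 2
      apply Finset.prod_congr rfl
      intro r hr
      rw [Function.update_of_ne (Finset.ne_of_mem_erase hr)]
    have hspec := Nat.multinomial_spec Finset.univ (Function.update a t (a t - 1))
    rw [hupdsum] at hspec
    rw [hprod, mul_comm (a t), ← mul_assoc, mul_comm (Nat.multinomial _ _), hspec, mul_comm]
  rw [Finset.sum_mul]
  rw [Finset.sum_congr rfl fun t ht => key t (by simpa using ht)]
  rw [← Finset.sum_mul]
  have hsum : ∑ t ∈ Finset.univ.filter (fun t => a t ≠ 0), a t = L := by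
    rw [hL, Finset.sum_filter_ne_zero]
  rw [hsum]
  cases' Nat.exists_eq_succ_of_ne_zero (Nat.pos_iff_ne_zero.1 h) with c hc
  rw [← hL, hc, Nat.factorial_succ]
  simp


/-- words of length determined by counts -/
noncomputable def wordsWith (L i : ℕ) (a : Fin i → ℕ) : Finset (List ℕ) :=
  (listsOfLen L (Finset.Icc 1 i)).filter (fun p => ∀ t : Fin i, p.count ((t : ℕ)+1) = a t)

lemma card_wordsWith {i : ℕ} : ∀ (L : ℕ) (a : Fin i → ℕ), (∑ t, a t) = L →
    (wordsWith L i a).card = Nat.multinomial Finset.univ a := by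
  intro L
  induction L with
  | zero =>
    intro a ha
    have hz : ∀ t, a t = 0 := by
      intro t; exact Finset.sum_eq_zero_iff.1 ha t (Finset.mem_univ t)
    have h1 : wordsWith 0 i a = {[]} := by
      ext p
      simp only [wordsWith, Finset.mem_filter, mem_listsOfLen, Finset.mem_singleton]
      constructor
      · rintro ⟨⟨hp, -⟩, -⟩; exact List.eq_nil_of_length_eq_zero hp
      · rintro rfl
        exact ⟨⟨rfl, by simp⟩, fun t => by simp [hz t]⟩
    rw [h1]
    have := Nat.multinomial_spec Finset.univ a
    rw [ha] at this
    simp only [Nat.factorial_zero] at this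
    have hprod : (∏ t, (a t)!) = 1 := by
      apply Finset.prod_eq_one; intro t _; rw [hz t]; rfl
    rw [hprod, one_mul] at this
    simp [this]
  | succ L ih =>
    intro a ha
    have hdecomp : wordsWith (L+1) i a =
        (Finset.univ.filter (fun t : Fin i => a t ≠ 0)).biUnion
          (fun t => (wordsWith L i (Function.update a t (a t - 1))).image (((t : ℕ)+1) :: ·)) := by
      ext p
      simp only [wordsWith, Finset.mem_filter, mem_listsOfLen, Finset.mem_biUnion,
        Finset.mem_image, Finset.mem_univ, true_and]
      constructor
      · rintro ⟨⟨hlen, hmem⟩, hcnt⟩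
        cases p with
        | nil => simp at hlen
        | cons c q =>
          have hc : c ∈ Finset.Icc 1 i := hmem c (by simp)
          rw [Finset.mem_Icc] at hc
          refine ⟨⟨c - 1, by omega⟩, ?_, q, ⟨⟨by simpa using hlen,
            fun x hx => hmem x (by simp [hx])⟩, ?_⟩, by simp; omega⟩
          · have := hcnt ⟨c - 1, by omega⟩
            simp only at this
            have hc1 : (c - 1) + 1 = c := by omega
            rw [hc1, List.count_cons_self] at this
            omega
          · intro r
            by_cases hr : r = ⟨c - 1, by omega⟩
            · subst hr
              have := hcnt ⟨c - 1, by omega⟩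
              simp only at this
              have hc1 : (c - 1) + 1 = c := by omega
              rw [hc1] at this ⊢
              rw [List.count_cons_self] at this
              rw [Function.update_self]
              omega
            · have := hcnt r
              have hne : ((r : ℕ) + 1) ≠ c := by
                intro hrc
                apply hr; apply Fin.ext; simp; omega
              rw [List.count_cons_of_ne hne.symm] at this
              rw [Function.update_of_ne hr]
              exact this
      · rintro ⟨t, ht, q, ⟨⟨hlen, hmem⟩, hcnt⟩, rfl⟩
        refine ⟨⟨by simp [hlen], ?_⟩, ?_⟩
        · intro x hx
          rcases List.mem_cons.1 hx with rfl | hx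
          · simp [Finset.mem_Icc]
          · exact hmem x hx
        · intro r
          by_cases hr : r = t
          · subst hr
            rw [List.count_cons_self]
            have := hcnt r
            rw [Function.update_self] at this
            omega
          · have hne : ((r : ℕ) + 1) ≠ ((t : ℕ) + 1) := by
              intro hrc; apply hr; apply Fin.ext; omega
            rw [List.count_cons_of_ne hne.symm]
            have := hcnt r
            rwa [Function.update_of_ne hr] at this
    rw [hdecomp, Finset.card_biUnion, multinomial_rec a (by omega)]
    · apply Finset.sum_congr rfl
      intro t ht
      simp only [Finset.mem_filter] at ht
      rw [Finset.card_image_of_injective _ (fun x y h => by injection h), ih]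
      have h2 : a t + ∑ x ∈ Finset.univ.erase t, a x = ∑ x, a x :=
        Finset.add_sum_erase _ a (Finset.mem_univ t)
      rw [Finset.sum_update_of_mem (Finset.mem_univ t), ← Finset.erase_eq]
      have := ht.2
      omega
    · intro x _ y _ hxy
      rw [Function.onFun, Finset.disjoint_left]
      intro p hp hp'
      simp only [Finset.mem_image] at hp hp'
      obtain ⟨q, -, rfl⟩ := hp
      obtain ⟨q', -, heq⟩ := hp'
      apply hxy
      apply Fin.ext
      injection heq with h1 h2
      omega

/-- the finset of patterns of length ℓ over [m] -/
noncomputable def patFinset (ℓ m : ℕ) : Finset (List ℕ) :=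
  (listsOfLen ℓ (Finset.Icc 1 m)).filter IsPattern

lemma sum_le_card_patFinset (ℓ m : ℕ) :
    (∑ i ∈ Finset.Icc 1 m,
      ∑ a ∈ (Finset.Nat.antidiagonalTuple i ℓ).filter (fun a => ∀ t, 1 ≤ a t),
        Nat.multinomial Finset.univ a) ≤ (patFinset ℓ m).card := by
  classical
  -- the W sets are subsets of patFinset and pairwise disjoint
  have hmemW : ∀ i ∈ Finset.Icc 1 m,
      ∀ a ∈ (Finset.Nat.antidiagonalTuple i ℓ).filter (fun a => ∀ t, 1 ≤ a t),
      ∀ p ∈ wordsWith ℓ i a,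
        (p.length = ℓ ∧ (∀ x ∈ p, 1 ≤ x ∧ x ≤ i) ∧ (∀ x, 1 ≤ x → x ≤ i → x ∈ p)) := by
    intro i hi a ha p hp
    simp only [wordsWith, Finset.mem_filter, mem_listsOfLen] at hp
    simp only [Finset.mem_filter, Finset.Nat.mem_antidiagonalTuple] at ha
    obtain ⟨⟨hlen, hmem⟩, hcnt⟩ := hp
    refine ⟨hlen, fun x hx => Finset.mem_Icc.1 (hmem x hx), ?_⟩
    intro x hx1 hxi
    have ht := hcnt ⟨x - 1, by omega⟩
    have hx' : ((⟨x - 1, by omega⟩ : Fin i) : ℕ) + 1 = x := by simp; omega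
    rw [hx'] at ht
    have := ha.2 ⟨x - 1, by omega⟩
    rw [← List.count_pos_iff]
    omega
  have hsub : ∀ i ∈ Finset.Icc 1 m,
      ∀ a ∈ (Finset.Nat.antidiagonalTuple i ℓ).filter (fun a => ∀ t, 1 ≤ a t),
      wordsWith ℓ i a ⊆ patFinset ℓ m := by
    intro i hi a ha p hp
    obtain ⟨hlen, hup, hdown⟩ := hmemW i hi a ha p hp
    rw [Finset.mem_Icc] at hi
    simp only [patFinset, Finset.mem_filter, mem_listsOfLen]
    refine ⟨⟨hlen, fun x hx => Finset.mem_Icc.2 ⟨(hup x hx).1, le_trans (hup x hx).2 hi.2⟩⟩,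
      i, hi.1, fun x => ⟨fun hx => hup x hx, fun hx => hdown x hx.1 hx.2⟩⟩
  -- turn double sum into card of big union
  set F : ℕ → Finset (List ℕ) := fun i =>
    ((Finset.Nat.antidiagonalTuple i ℓ).filter (fun a => ∀ t, 1 ≤ a t)).biUnion
      (fun a => wordsWith ℓ i a) with hF
  have hinner : ∀ i ∈ Finset.Icc 1 m,
      (F i).card = ∑ a ∈ (Finset.Nat.antidiagonalTuple i ℓ).filter (fun a => ∀ t, 1 ≤ a t),
        (wordsWith ℓ i a).card := by
    intro i hi
    apply Finset.card_biUnion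
    intro x hx y hy hxy
    rw [Function.onFun, Finset.disjoint_left]
    intro p hp hp'
    apply hxy
    simp only [wordsWith, Finset.mem_filter] at hp hp'
    funext t
    rw [← hp.2 t, ← hp'.2 t]
  have houter : ((Finset.Icc 1 m).biUnion F).card = ∑ i ∈ Finset.Icc 1 m, (F i).card := by
    apply Finset.card_biUnion
    intro x hx y hy hxy
    rw [Function.onFun, Finset.disjoint_left]
    intro p hp hp'
    simp only [hF, Finset.mem_biUnion] at hp hp'
    obtain ⟨a, ha, hpa⟩ := hp
    obtain ⟨a', ha', hpa'⟩ := hp'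
    obtain ⟨-, hup, hdown⟩ := hmemW x hx a ha p hpa
    obtain ⟨-, hup', hdown'⟩ := hmemW y hy a' ha' p hpa'
    rw [Finset.mem_coe, Finset.mem_Icc] at hx hy
    rcases Nat.lt_or_ge x y with h | h
    · exact absurd ((hup y (hdown' y (by omega) (le_refl y))).2) (by omega)
    · rcases Nat.lt_or_ge y x with h' | h'
      · exact absurd ((hup' x (hdown x (by omega) (le_refl x))).2) (by omega)
      · exact hxy (by omega)
  calc (∑ i ∈ Finset.Icc 1 m,
      ∑ a ∈ (Finset.Nat.antidiagonalTuple i ℓ).filter (fun a => ∀ t, 1 ≤ a t),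
        Nat.multinomial Finset.univ a)
      = ∑ i ∈ Finset.Icc 1 m, (F i).card := by
        apply Finset.sum_congr rfl
        intro i hi
        rw [hinner i hi]
        apply Finset.sum_congr rfl
        intro a ha
        rw [card_wordsWith ℓ a]
        simp only [Finset.mem_filter, Finset.Nat.mem_antidiagonalTuple] at ha
        exact ha.1
    _ = ((Finset.Icc 1 m).biUnion F).card := (houter).symm
    _ ≤ (patFinset ℓ m).card := by
        apply Finset.card_le_card
        intro p hp
        simp only [Finset.mem_biUnion, hF] at hp
        obtain ⟨i, hi, a, ha, hpa⟩ := hp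
        exact hsub i hi a ha hpa


section Euler
variable {α V : Type*} [DecidableEq α] [DecidableEq V] (s t : α → V)

/-- link relation between edges -/
def Lnk (e f : α) : Prop := t e = s f

/-- a trail within edge set E -/
def Good (E : Finset α) (T : List α) : Prop :=
  T.Nodup ∧ (∀ e ∈ T, e ∈ E) ∧ T.Chain' (Lnk s t)

/-- closed trail -/
def Closed (T : List α) : Prop := T.getLast?.map t = T.head?.map s

variable {s t}

lemma closed_iff {T : List α} (h : T ≠ []) :
    Closed s t T ↔ t (T.getLast h) = s (T.head h) := by
  rw [Closed, List.getLast?_eq_getLast h, List.head?_eq_head h]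
  simp

lemma map_s_tail_eq {T : List α} (hch : T.Chain' (Lnk s t)) :
    (T.map s).tail = (T.map t).dropLast := by
  induction T with
  | nil => simp
  | cons a T ih =>
    cases T with
    | nil => simp
    | cons b T' =>
      have hch' : (b :: T').Chain' (Lnk s t) := (List.isChain_cons_cons.1 hch).2
      have hab : t a = s b := (List.isChain_cons_cons.1 hch).1
      have ih' := ih hch'
      simp only [List.map_cons, List.tail_cons] at ih' ⊢
      rw [List.dropLast_cons_of_ne_nil (by simp), ← ih', ← hab]

lemma getLast_map' {T : List α} (h : T ≠ []) (f : α → V) :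
    (T.map f).getLast (by simpa using h) = f (T.getLast h) := by
  have h1 := List.getLast?_eq_getLast (l := T.map f) (by simpa using h)
  have h2 := List.getLast?_eq_getLast (l := T) h
  have h3 : (T.map f).getLast? = T.getLast?.map f := List.getLast?_map
  rw [h1, h2] at h3
  simpa using h3

lemma head_map' {T : List α} (h : T ≠ []) (f : α → V) :
    (T.map f).head (by simpa using h) = f (T.head h) := by
  cases T with
  | nil => simp at h
  | cons a T => simp

/-- fundamental counting identity along a trail -/
lemma count_start_end {T : List α} (hne : T ≠ []) (hch : T.Chain' (Lnk s t)) (v : V) :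
    List.count v (T.map s) + (if t (T.getLast hne) = v then 1 else 0)
      = List.count v (T.map t) + (if s (T.head hne) = v then 1 else 0) := by
  have hms : T.map s ≠ [] := by simpa using hne
  have hmt : T.map t ≠ [] := by simpa using hne
  have h1 : T.map s = s (T.head hne) :: (T.map t).dropLast := by
    conv_lhs => rw [← List.cons_head_tail hms]
    rw [map_s_tail_eq hch, head_map' hne s]
  have h2 : T.map t = (T.map t).dropLast ++ [t (T.getLast hne)] := by
    conv_lhs => rw [← List.dropLast_append_getLast hmt]
    rw [getLast_map' hne t]
  rw [h1]
  conv_rhs => rw [h2]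
  simp only [List.count_cons, List.count_append, List.count_nil, beq_iff_eq]
  have hA : ∀ x : V, (if x = v then 1 else 0) = (if v = x then 1 else 0) := by
    intro x; rcases eq_or_ne x v with rfl | h
    · simp
    · simp [h, Ne.symm h]
  rw [hA (s (T.head hne)), hA (t (T.getLast hne))]
  omega

/-- for a nodup list, count of v among sources equals a filter card -/
lemma count_map_eq_card {T : List α} (hnd : T.Nodup) (f : α → V) (v : V) :
    List.count v (T.map f) = (T.toFinset.filter (fun e => f e = v)).card := by
  classical
  induction T with
  | nil => simp
  | cons a T ih =>
    have hnd' : T.Nodup := hnd.of_cons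
    have ha : a ∉ T := by simp [List.nodup_cons] at hnd; exact hnd.1
    rw [List.map_cons, List.count_cons, ih hnd']
    rw [List.toFinset_cons, Finset.filter_insert]
    by_cases h : f a = v
    · rw [if_pos h, Finset.card_insert_of_notMem (by simp [ha]), if_pos (by simpa using h)]
    · rw [if_neg h, if_neg (by simpa using h)]
      simp

/-- extend a trail until no unused out-edge remains at its end -/
lemma extend_maximal (E : Finset α) :
    ∀ (k : ℕ) (T : List α) (hne : T ≠ []), Good s t E T → E.card - T.length ≤ k →
    ∃ T' : List α, ∃ hne' : T' ≠ [], Good s t E T' ∧ T'.head hne' = T.head hne ∧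
      (∀ f ∈ E, s f = t (T'.getLast hne') → f ∈ T') := by
  intro k
  induction k with
  | zero =>
    intro T hne hg hk
    refine ⟨T, hne, hg, rfl, ?_⟩
    intro f hf hsf
    by_contra hfT
    -- T.length ≥ E.card but f ∈ E \ T: contradiction with nodup ⊆ E
    have hsub : T.toFinset ⊆ E := fun x hx => hg.2.1 x (List.mem_toFinset.1 hx)
    have hcard : T.toFinset.card = T.length := List.toFinset_card_of_nodup hg.1
    have hlt : T.toFinset ⊂ E := ⟨hsub, fun hsupset => hfT (List.mem_toFinset.1 (hsupset hf))⟩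
    have := Finset.card_lt_card hlt
    omega
  | succ k ih =>
    intro T hne hg hk
    by_cases hstop : ∀ f ∈ E, s f = t (T.getLast hne) → f ∈ T
    · exact ⟨T, hne, hg, rfl, hstop⟩
    · push_neg at hstop
      obtain ⟨f, hf, hsf, hfT⟩ := hstop
      have hne' : T ++ [f] ≠ [] := by simp
      have hg' : Good s t E (T ++ [f]) := by
        refine ⟨?_, ?_, ?_⟩
        · rw [List.nodup_append]
          exact ⟨hg.1, List.nodup_singleton f, fun a ha b hb hab => hfT (by simp at hb; subst hb; subst hab; exact ha)⟩
        · intro e he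
          rcases List.mem_append.1 he with he | he
          · exact hg.2.1 e he
          · simp at he; subst he; exact hf
        · unfold List.Chain'
          rw [List.isChain_append]
          refine ⟨hg.2.2, List.isChain_singleton f, ?_⟩
          intro x hx y hy
          rw [List.getLast?_eq_getLast hne] at hx
          simp at hx hy
          subst hx; subst hy
          exact hsf.symm
      have hlen : E.card - (T ++ [f]).length ≤ k := by
        have hsub : T.toFinset ⊆ E := fun x hx => hg.2.1 x (List.mem_toFinset.1 hx)
        have hcard : T.toFinset.card = T.length := List.toFinset_card_of_nodup hg.1
        have := Finset.card_le_card hsub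
        simp only [List.length_append, List.length_singleton]
        omega
      obtain ⟨T', hne'', hg'', hhead, hmax⟩ := ih (T ++ [f]) hne' hg' hlen
      refine ⟨T', hne'', hg'', ?_, hmax⟩
      rw [hhead]
      cases T with
      | nil => exact absurd rfl hne
      | cons a T0 => simp

/-- in a balanced graph, a maximal trail is closed -/
lemma maximal_closed {E : Finset α} {T : List α} (hne : T ≠ []) (hg : Good s t E T)
    (bal : ∀ v, (E.filter fun e => s e = v).card = (E.filter fun e => t e = v).card)
    (hmax : ∀ f ∈ E, s f = t (T.getLast hne) → f ∈ T) :
    Closed s t T := by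
  classical
  set w := t (T.getLast hne) with hw
  have hcnt := count_start_end hne hg.2.2 w
  rw [if_pos rfl] at hcnt
  have hS : List.count w (T.map s) = (E.filter fun e => s e = w).card := by
    rw [count_map_eq_card hg.1]
    congr 1
    apply Finset.Subset.antisymm
    · intro e he
      simp only [Finset.mem_filter, List.mem_toFinset] at he ⊢
      exact ⟨hg.2.1 e he.1, he.2⟩
    · intro e he
      simp only [Finset.mem_filter, List.mem_toFinset] at he ⊢
      exact ⟨hmax e he.1 he.2, he.2⟩
  have hT : List.count w (T.map t) ≤ (E.filter fun e => t e = w).card := by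
    rw [count_map_eq_card hg.1]
    apply Finset.card_le_card
    intro e he
    simp only [Finset.mem_filter, List.mem_toFinset] at he ⊢
    exact ⟨hg.2.1 e he.1, he.2⟩
  have hbal := bal w
  rw [closed_iff hne]
  by_cases h : s (T.head hne) = w
  · exact h.symm
  · rw [if_neg h] at hcnt
    omega

/-- rotation of a closed trail -/
lemma rotate_closed {E : Finset α} {A B : List α} (hg : Good s t E (A ++ B))
    (hcl : Closed s t (A ++ B)) : Good s t E (B ++ A) ∧ Closed s t (B ++ A) := by
  rcases eq_or_ne A [] with rfl | hA
  · exact ⟨by simpa using hg, by simpa using hcl⟩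
  rcases eq_or_ne B [] with rfl | hB
  · exact ⟨by simpa using hg, by simpa using hcl⟩
  have hchain := hg.2.2
  unfold List.Chain' at hchain
  rw [List.isChain_append] at hchain
  obtain ⟨hcA, hcB, hAB⟩ := hchain
  have hne : A ++ B ≠ [] := by simp [hA]
  have hcl' := (closed_iff hne).1 hcl
  have hlastAB : (A ++ B).getLast hne = B.getLast hB := List.getLast_append_of_ne_nil _ hB
  have hheadAB : (A ++ B).head hne = A.head hA := List.head_append_of_ne_nil hA
  refine ⟨⟨?_, ?_, ?_⟩, ?_⟩
  · obtain ⟨h1, h2, h3⟩ := List.nodup_append.1 hg.1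
    exact List.nodup_append.2 ⟨h2, h1, fun a ha b hb hab => h3 b hb a ha hab.symm⟩
  · intro e he
    apply hg.2.1
    rw [List.mem_append] at he ⊢
    tauto
  · unfold List.Chain'
    rw [List.isChain_append]
    refine ⟨hcB, hcA, ?_⟩
    intro x hx y hy
    rw [List.getLast?_eq_getLast hB] at hx
    rw [List.head?_eq_head hA] at hy
    simp at hx hy
    subst hx; subst hy
    rw [← hlastAB, ← hheadAB]
    exact hcl'
  · have hne2 : B ++ A ≠ [] := by simp [hB]
    rw [closed_iff hne2]
    rw [List.getLast_append_of_ne_nil _ hA, List.head_append_of_ne_nil hB]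
    -- need t (A.getLast) = s (B.head) : this is the link inside A ++ B
    have := hAB (A.getLast hA) (by rw [List.getLast?_eq_getLast hA]; simp)
      (B.head hB) (by rw [List.head?_eq_head hB]; simp)
    exact this


/-- balance is preserved after removing a closed trail -/
lemma balance_sdiff {E : Finset α} {T : List α} (hg : Good s t E T) (hcl : Closed s t T)
    (bal : ∀ v, (E.filter fun e => s e = v).card = (E.filter fun e => t e = v).card) :
    ∀ v, ((E \ T.toFinset).filter fun e => s e = v).card
        = ((E \ T.toFinset).filter fun e => t e = v).card := by
  classical
  intro v
  rcases eq_or_ne T [] with rfl | hne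
  · simpa using bal v
  have hcnt := count_start_end hne hg.2.2 v
  have hcl' := (closed_iff hne).1 hcl
  rw [hcl'] at hcnt
  -- so counts of sources and targets along T agree at v
  have hcnt' : List.count v (T.map s) = List.count v (T.map t) := by omega
  have hsplit : ∀ f : α → V,
      ((E \ T.toFinset).filter fun e => f e = v).card + (T.toFinset.filter fun e => f e = v).card
        = (E.filter fun e => f e = v).card := by
    intro f
    rw [← Finset.card_union_of_disjoint]
    · congr 1
      rw [← Finset.filter_union]
      congr 1
      rw [Finset.sdiff_union_of_subset]
      intro x hx
      exact hg.2.1 x (List.mem_toFinset.1 hx)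
    · apply Finset.disjoint_filter_filter
      exact Finset.sdiff_disjoint
  have h1 := hsplit s
  have h2 := hsplit t
  have h3 : (T.toFinset.filter fun e => s e = v).card = (T.toFinset.filter fun e => t e = v).card := by
    rw [← count_map_eq_card hg.1 s v, ← count_map_eq_card hg.1 t v, hcnt']
  have hbal := bal v
  omega

/-- main step: a non-covering closed trail can be enlarged -/
theorem euler_circuit (E : Finset α) (hEne : E.Nonempty)
    (bal : ∀ v, (E.filter fun e => s e = v).card = (E.filter fun e => t e = v).card)
    (conn : ∀ e ∈ E, ∀ f ∈ E,
      Relation.ReflTransGen (fun x y => x ∈ E ∧ y ∈ E ∧ t x = s y) e f) :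
    ∃ T : List α, T ≠ [] ∧ Good s t E T ∧ Closed s t T ∧ T.toFinset = E := by
  classical
  -- start with a maximal trail from any edge
  obtain ⟨e0, he0⟩ := hEne
  have hg0 : Good s t E [e0] := ⟨List.nodup_singleton _, by simpa using he0, List.isChain_singleton _⟩
  obtain ⟨T0, hne0, hgT0, -, hmax0⟩ := extend_maximal E E.card [e0] (by simp) hg0 (by omega)
  have hcl0 : Closed s t T0 := maximal_closed hne0 hgT0 bal hmax0
  -- now grow by induction
  suffices H : ∀ (k : ℕ) (T : List α), T ≠ [] → Good s t E T → Closed s t T →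
      E.card - T.length ≤ k → ∃ T' : List α, T' ≠ [] ∧ Good s t E T' ∧ Closed s t T' ∧
        T'.toFinset = E by
    exact H E.card T0 hne0 hgT0 hcl0 (by omega)
  intro k
  induction k with
  | zero =>
    intro T hne hg hcl hk
    refine ⟨T, hne, hg, hcl, ?_⟩
    apply Finset.eq_of_subset_of_card_le
    · intro x hx; exact hg.2.1 x (List.mem_toFinset.1 hx)
    · rw [List.toFinset_card_of_nodup hg.1]; omega
  | succ k ih =>
    intro T hne hg hcl hk
    by_cases hcov : T.toFinset = E
    · exact ⟨T, hne, hg, hcl, hcov⟩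
    · -- pick an uncovered edge and march to it
      have hsub : T.toFinset ⊆ E := fun x hx => hg.2.1 x (List.mem_toFinset.1 hx)
      obtain ⟨f, hfE, hfT⟩ := Finset.exists_of_ssubset ⟨hsub, fun h => hcov
        (Finset.Subset.antisymm hsub h)⟩
      have he0T : T.head hne ∈ T := List.head_mem hne
      have hreach := conn (T.head hne) (hg.2.1 _ he0T) f hfE
      -- find an unused edge g whose source is the target of a used edge
      have hfind : f ∈ T.toFinset ∨ ∃ g ∈ E, g ∉ T.toFinset ∧ ∃ e ∈ T, t e = s g := by
        clear hfT
        induction hreach with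
        | refl => exact Or.inl (List.mem_toFinset.2 he0T)
        | tail hab hbc ihab =>
          rename_i b c
          rcases ihab hbc.1 with hb | hprev
          · by_cases hc : c ∈ T.toFinset
            · exact Or.inl hc
            · exact Or.inr ⟨c, hbc.2.1, hc, b, List.mem_toFinset.1 hb, hbc.2.2⟩
          · exact Or.inr hprev
      rcases hfind with hf | ⟨g, hgE, hgT, e, heT, hts⟩
      · exact absurd hf hfT
      -- grow a closed trail C from s g inside E \ T
      have hgE' : g ∈ E \ T.toFinset := Finset.mem_sdiff.2 ⟨hgE, hgT⟩
      have hgood : Good s t (E \ T.toFinset) [g] :=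
        ⟨List.nodup_singleton _, by simpa using hgE', List.isChain_singleton _⟩
      obtain ⟨C, hCne, hCg, hChead, hCmax⟩ :=
        extend_maximal (E \ T.toFinset) (E \ T.toFinset).card [g] (by simp) hgood (by omega)
      have bal' := balance_sdiff hg hcl bal
      have hCcl : Closed s t C := maximal_closed hCne hCg bal' hCmax
      -- rotate T to end at e
      obtain ⟨A, B, rfl⟩ := List.append_of_mem heT
      have hg2 : Good s t E ((A ++ [e]) ++ B) := by rwa [List.append_assoc, List.singleton_append]
      have hcl2 : Closed s t ((A ++ [e]) ++ B) := by
        rwa [List.append_assoc, List.singleton_append]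
      obtain ⟨hgR, hclR⟩ := rotate_closed hg2 hcl2
      rw [← List.append_assoc] at hgR hclR
      have hRne : (B ++ A) ++ [e] ≠ [] := by simp
      have hRlast : ((B ++ A) ++ [e]).getLast hRne = e := List.getLast_append_singleton _
      have hRfin : ((B ++ A) ++ [e]).toFinset = (A ++ e :: B).toFinset := by
        ext x; simp; tauto
      -- combine
      have hTCne : ((B ++ A) ++ [e]) ++ C ≠ [] := by simp
      have hdisj : ∀ x ∈ (B ++ A) ++ [e], x ∉ C := by
        intro x hx hxC
        have h1 := (Finset.mem_sdiff.1 (hCg.2.1 x hxC)).2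
        apply h1
        rw [← hRfin]
        exact List.mem_toFinset.2 hx
      have hChead' : C.head hCne = g := hChead
      have hgood3 : Good s t E (((B ++ A) ++ [e]) ++ C) := by
        refine ⟨?_, ?_, ?_⟩
        · rw [List.nodup_append]
          exact ⟨hgR.1, hCg.1, fun x hx y hy hxy => hdisj x hx (hxy ▸ hy)⟩
        · intro x hx
          rcases List.mem_append.1 hx with hx | hx
          · exact hgR.2.1 x hx
          · exact (Finset.mem_sdiff.1 (hCg.2.1 x hx)).1
        · unfold List.Chain'
          rw [List.isChain_append]
          refine ⟨hgR.2.2, hCg.2.2, ?_⟩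
          intro x hx y hy
          rw [List.getLast?_eq_getLast hRne] at hx
          rw [List.head?_eq_head hCne] at hy
          simp only [Option.mem_def, Option.some.injEq] at hx hy
          subst hx; subst hy
          show t (((B ++ A) ++ [e]).getLast hRne) = s (C.head hCne)
          rw [hRlast, hChead', hts]
      have hcl3 : Closed s t (((B ++ A) ++ [e]) ++ C) := by
        have c1 := (closed_iff hCne).1 hCcl
        have c2 := (closed_iff hRne).1 hclR
        rw [closed_iff hTCne, List.getLast_append_of_ne_nil _ hCne,
          List.head_append_of_ne_nil hRne]
        calc t (C.getLast hCne) = s (C.head hCne) := c1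
          _ = s g := by rw [hChead']
          _ = t e := hts.symm
          _ = t (((B ++ A) ++ [e]).getLast hRne) := by rw [hRlast]
          _ = s (((B ++ A) ++ [e]).head hRne) := c2
      have hlen3 : E.card - (((B ++ A) ++ [e]) ++ C).length ≤ k := by
        have h2 : C.length ≥ 1 := by
          cases C with
          | nil => exact absurd rfl hCne
          | cons a l => simp
        simp only [List.length_append, List.length_cons, List.length_singleton] at hk ⊢
        omega
      exact ih (((B ++ A) ++ [e]) ++ C) hTCne hgood3 hcl3 hlen3

end Euler

section Application
open Relation

variable {ℓ m : ℕ}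

lemma mem_patFinset {p : List ℕ} :
    p ∈ patFinset ℓ m ↔ p.length = ℓ ∧ (∀ x ∈ p, x ∈ Finset.Icc 1 m) ∧ IsPattern p := by
  simp only [patFinset, Finset.mem_filter, mem_listsOfLen]
  tauto

lemma pattern_of_mem_iff {p q : List ℕ} (h : ∀ x, x ∈ p ↔ x ∈ q) (hp : IsPattern p) :
    IsPattern q := by
  obtain ⟨k, hk, hiff⟩ := hp
  exact ⟨k, hk, fun x => (h x).symm.trans (hiff x)⟩

lemma pattern_ne_nil {p : List ℕ} (hp : IsPattern p) : p ≠ [] := by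
  obtain ⟨k, hk, hiff⟩ := hp
  intro h
  subst h
  simpa using (hiff 1).2 ⟨le_refl 1, hk⟩

lemma patFinset_len_pos {p : List ℕ} (hp : p ∈ patFinset ℓ m) : 1 ≤ ℓ := by
  obtain ⟨h1, -, h3⟩ := mem_patFinset.1 hp
  have := pattern_ne_nil h3
  cases p with
  | nil => exact absurd rfl this
  | cons a l => rw [← h1]; simp

def RR (ℓ m : ℕ) (x y : List ℕ) : Prop :=
  x ∈ patFinset ℓ m ∧ y ∈ patFinset ℓ m ∧ x.tail = y.dropLast

lemma pat_balance (v : List ℕ) :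
    ((patFinset ℓ m).filter fun e => e.dropLast = v).card
      = ((patFinset ℓ m).filter fun e => e.tail = v).card := by
  classical
  apply Finset.card_bij' (fun e _ => e.getLastD 0 :: v) (fun f _ => v ++ [f.headD 0])
  · -- forward maps into target
    intro e he
    simp only [Finset.mem_filter] at he ⊢
    obtain ⟨hE, hdl⟩ := he
    obtain ⟨hlen, hmem, hpat⟩ := mem_patFinset.1 hE
    have hne : e ≠ [] := pattern_ne_nil hpat
    have hesplit : v ++ [e.getLast hne] = e := by
      rw [← hdl]; exact List.dropLast_append_getLast hne
    have hgl : e.getLastD 0 = e.getLast hne := by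
      rw [List.getLastD_eq_getLast?, List.getLast?_eq_getLast hne]; rfl
    constructor
    · rw [mem_patFinset]
      refine ⟨?_, ?_, ?_⟩
      · have : e.length = ℓ := hlen
        rw [← hesplit] at this
        simpa using this
      · intro x hx
        apply hmem
        rw [← hesplit]
        rcases List.mem_cons.1 hx with rfl | hx
        · rw [hgl]; simp
        · simp [hx]
      · apply pattern_of_mem_iff _ hpat
        intro x
        conv_lhs => rw [← hesplit]
        rw [hgl]
        simp [or_comm]
    · simp
  · -- backward maps into source
    intro f hf
    simp only [Finset.mem_filter] at hf ⊢
    obtain ⟨hE, htl⟩ := hf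
    obtain ⟨hlen, hmem, hpat⟩ := mem_patFinset.1 hE
    have hne : f ≠ [] := pattern_ne_nil hpat
    have hfsplit : f.headD 0 :: v = f := by
      rw [← htl]
      cases f with
      | nil => exact absurd rfl hne
      | cons a l => rfl
    constructor
    · rw [mem_patFinset]
      refine ⟨?_, ?_, ?_⟩
      · have : f.length = ℓ := hlen
        rw [← hfsplit] at this
        simpa using this
      · intro x hx
        apply hmem
        rw [← hfsplit]
        rcases List.mem_append.1 hx with hx | hx
        · simp [hx]
        · simp at hx; simp [hx]
      · apply pattern_of_mem_iff _ hpat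
        intro x
        conv_lhs => rw [← hfsplit]
        simp [or_comm]
    · simp
  · -- left inverse
    intro e he
    simp only [Finset.mem_filter] at he
    obtain ⟨hE, hdl⟩ := he
    have hne : e ≠ [] := pattern_ne_nil (mem_patFinset.1 hE).2.2
    simp only [List.headD_cons]
    rw [← hdl]
    have hgl : e.getLastD 0 = e.getLast hne := by
      rw [List.getLastD_eq_getLast?, List.getLast?_eq_getLast hne]; rfl
    rw [hgl]
    exact List.dropLast_append_getLast hne
  · -- right inverse
    intro f hf
    simp only [Finset.mem_filter] at hf
    obtain ⟨hE, htl⟩ := hf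
    have hne : f ≠ [] := pattern_ne_nil (mem_patFinset.1 hE).2.2
    rw [List.getLastD_concat]
    rw [← htl]
    cases f with
    | nil => exact absurd rfl hne
    | cons a l => rfl

lemma glue_pattern {u u' : List ℕ} (hu : u ∈ patFinset ℓ m) (hu' : u' ∈ patFinset ℓ m)
    (hlink : u.tail = u'.dropLast) (hne' : u' ≠ []) :
    IsPattern (u ++ [u'.getLast hne']) ∧ (∀ x ∈ u ++ [u'.getLast hne'], x ∈ Finset.Icc 1 m) := by
  obtain ⟨hlen, hmem, j, hj1, hju⟩ := mem_patFinset.1 hu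
  obtain ⟨hlen', hmem', j', hj1', hju'⟩ := mem_patFinset.1 hu'
  set b := u'.getLast hne' with hb
  have hbu' : b ∈ u' := List.getLast_mem hne'
  have hbj' : 1 ≤ b ∧ b ≤ j' := (hju' b).1 hbu'
  have hu'split : u'.dropLast ++ [b] = u' := List.dropLast_append_getLast hne'
  have hmem_u' : ∀ x, x ∈ u' ↔ (x ∈ u.tail ∨ x = b) := by
    intro x
    conv_lhs => rw [← hu'split, ← hlink]
    simp
  have htl_sub : ∀ x ∈ u.tail, x ∈ u := fun x hx => List.mem_of_mem_tail hx
  constructor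
  · by_cases hbj : b ≤ j
    · refine ⟨j, hj1, fun x => ?_⟩
      simp only [List.mem_append, List.mem_singleton]
      constructor
      · rintro (hx | rfl)
        · exact (hju x).1 hx
        · exact ⟨hbj'.1, hbj⟩
      · intro hx
        exact Or.inl ((hju x).2 hx)
    · -- b > j; show j' = b
      push_neg at hbj
      have hj'b : j' = b := by
        have hj'mem : j' ∈ u' := (hju' j').2 ⟨hj1', le_refl _⟩
        rcases (hmem_u' j').1 hj'mem with hx | hx
        · have := ((hju j').1 (htl_sub _ hx)).2
          omega
        · exact hx
      refine ⟨b, by omega, fun x => ?_⟩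
      simp only [List.mem_append, List.mem_singleton]
      constructor
      · rintro (hx | rfl)
        · have := (hju x).1 hx
          constructor <;> omega
        · omega
      · rintro ⟨hx1, hxb⟩
        by_cases hxj : x ≤ j
        · exact Or.inl ((hju x).2 ⟨hx1, hxj⟩)
        · right
          have hxu' : x ∈ u' := (hju' x).2 ⟨hx1, by omega⟩
          rcases (hmem_u' x).1 hxu' with hx | hx
          · have := ((hju x).1 (htl_sub _ hx)).2
            omega
          · exact hx
  · intro x hx
    rcases List.mem_append.1 hx with hx | hx
    · exact hmem x hx
    · simp only [List.mem_singleton] at hx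
      subst hx
      exact hmem' _ hbu'

lemma maxL_le {w : List ℕ} {k : ℕ} (h : ∀ x ∈ w, x ≤ k) : w.foldr max 0 ≤ k := by
  induction w with
  | nil => simp
  | cons a l ih =>
    simp only [List.foldr_cons]
    exact max_le (h a (by simp)) (ih fun x hx => h x (by simp [hx]))

lemma le_maxL {w : List ℕ} {x : ℕ} (h : x ∈ w) : x ≤ w.foldr max 0 := by
  induction w with
  | nil => simp at h
  | cons a l ih =>
    rcases List.mem_cons.1 h with rfl | h
    · simp
    · exact le_trans (ih h) (by simp)

lemma maxL_pattern {p : List ℕ} {k : ℕ} (hk : 1 ≤ k) (hiff : ∀ x, x ∈ p ↔ (1 ≤ x ∧ x ≤ k)) :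
    p.foldr max 0 = k :=
  le_antisymm (maxL_le fun x hx => ((hiff x).1 hx).2)
    (le_maxL ((hiff k).2 ⟨hk, le_refl k⟩))

lemma one_le_sum {p : List ℕ} (h : 1 ∈ p) : 1 ≤ p.sum := by
  induction p with
  | nil => simp at h
  | cons a l ih =>
    rcases List.mem_cons.1 h with rfl | h
    · simp
    · have := ih h
      simp only [List.sum_cons]
      omega

/-- every pattern reaches the all-ones pattern -/
lemma reach_ones_aux (hm : 1 ≤ m) :
    ∀ (N : ℕ) (p : List ℕ),
      (ℓ + 1) * p.sum + p.idxOf (p.foldr max 0) ≤ N → p ∈ patFinset ℓ m →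
      ReflTransGen (RR ℓ m) p (List.replicate ℓ 1) := by
  intro N
  induction N with
  | zero =>
    intro p hμ hp
    obtain ⟨hlen, hmem, k, hk1, hiff⟩ := mem_patFinset.1 hp
    have h1p : (1 : ℕ) ∈ p := (hiff 1).2 ⟨le_refl _, hk1⟩
    have h2 := one_le_sum h1p
    have h3 : 0 < (ℓ + 1) * p.sum := Nat.mul_pos (by omega) (by omega)
    omega
  | succ N ih =>
    intro p hμ hp
    obtain ⟨hlen, hmem, k, hk1, hiff⟩ := mem_patFinset.1 hp
    by_cases hrep : p = List.replicate ℓ 1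
    · rw [hrep]
    have h1p : (1 : ℕ) ∈ p := (hiff 1).2 ⟨le_refl _, hk1⟩
    have hk2 : 2 ≤ k := by
      rcases Nat.lt_or_ge k 2 with hk | hk
      · exfalso
        apply hrep
        apply List.eq_replicate_iff.2
        refine ⟨hlen, fun x hx => ?_⟩
        have := (hiff x).1 hx
        omega
      · exact hk
    cases p with
    | nil => simp at h1p
    | cons h tl =>
    have hmaxp : (h :: tl).foldr max 0 = k := maxL_pattern (by omega) hiff
    have hkp : k ∈ h :: tl := (hiff k).2 ⟨by omega, le_refl _⟩
    have hhp : h ∈ h :: tl := by simp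
    have hh1 : 1 ≤ h ∧ h ≤ k := (hiff h).1 hhp
    have htl_len : tl.length = ℓ - 1 ∧ 1 ≤ ℓ := by
      simp only [List.length_cons] at hlen
      omega
    -- uniform step processing
    have main : ∀ (c : ℕ) (k' : ℕ), 1 ≤ k' → c ∈ Finset.Icc 1 m →
        (∀ x, x ∈ tl ++ [c] ↔ (1 ≤ x ∧ x ≤ k')) →
        (ℓ + 1) * (tl ++ [c]).sum + (tl ++ [c]).idxOf ((tl ++ [c]).foldr max 0) ≤ N →
        ReflTransGen (RR ℓ m) (h :: tl) (List.replicate ℓ 1) := by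
      intro c k' hk'1 hcm hiff' hμ'
      have hw'E : tl ++ [c] ∈ patFinset ℓ m := by
        rw [mem_patFinset]
        refine ⟨by simp; omega, ?_, k', hk'1, hiff'⟩
        intro x hx
        rcases List.mem_append.1 hx with hx | hx
        · exact hmem x (by simp [hx])
        · simp only [List.mem_singleton] at hx; subst hx; exact hcm
      refine ReflTransGen.head ⟨hp, hw'E, ?_⟩ (ih (tl ++ [c]) hμ' hw'E)
      simp [List.dropLast_concat]
    rw [hmaxp] at hμ
    have hsum_p : (h :: tl).sum = h + tl.sum := by simp
    by_cases hh_tl : h ∈ tl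
    · -- case 1 : head occurs again in the tail, append 1
      have hiff' : ∀ x, x ∈ tl ++ [1] ↔ (1 ≤ x ∧ x ≤ k) := by
        intro x
        simp only [List.mem_append, List.mem_singleton]
        constructor
        · rintro (hx | rfl)
          · exact (hiff x).1 (by simp [hx])
          · exact ⟨le_refl _, by omega⟩
        · intro hx
          rcases List.mem_cons.1 ((hiff x).2 hx) with rfl | hx'
          · exact Or.inl hh_tl
          · exact Or.inl hx'
      have maxw' : (tl ++ [1]).foldr max 0 = k := maxL_pattern (by omega) hiff'
      apply main 1 k (by omega) (by simp; omega) hiff'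
      rw [maxw']
      rcases Nat.eq_or_lt_of_le hh1.1 with h1 | h2
      · -- h = 1 : sum preserved, index of max decreases
        have hktl : k ∈ tl := by
          rcases List.mem_cons.1 hkp with hk | hk
          · omega
          · exact hk
        have hidx1 : (tl ++ [1]).idxOf k = tl.idxOf k := List.idxOf_append_of_mem hktl
        have hidx2 : (h :: tl).idxOf k = tl.idxOf k + 1 := by
          rw [List.idxOf_cons_ne _ (by omega : h ≠ k)]
        have hsum' : (tl ++ [1]).sum = (h :: tl).sum := by simp; omega
        have hprod : (ℓ + 1) * (tl ++ [1]).sum = (ℓ + 1) * (h :: tl).sum := by rw [hsum']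
        rw [hidx2] at hμ
        omega
      · -- h ≥ 2 : sum strictly decreases
        have hsum' : (tl ++ [1]).sum + h = (h :: tl).sum + 1 := by simp; omega
        have hidxle : (tl ++ [1]).idxOf k ≤ ℓ := by
          have := List.idxOf_le_length (a := k) (l := tl ++ [1])
          simp only [List.length_append, List.length_singleton] at this
          omega
        have hdist : (ℓ + 1) * ((tl ++ [1]).sum + 1) = (ℓ + 1) * (tl ++ [1]).sum + (ℓ + 1) := by
          ring
        have hmul : (ℓ + 1) * ((tl ++ [1]).sum + 1) ≤ (ℓ + 1) * (h :: tl).sum :=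
          Nat.mul_le_mul_left _ (by omega)
        omega
    · by_cases hhk : h = k
      · -- case 2 : head is the unique max, append 1
        subst hhk
        have hiff' : ∀ x, x ∈ tl ++ [1] ↔ (1 ≤ x ∧ x ≤ h - 1) := by
          intro x
          simp only [List.mem_append, List.mem_singleton]
          constructor
          · rintro (hx | rfl)
            · have hb := (hiff x).1 (by simp [hx])
              have : x ≠ h := fun hxh => hh_tl (hxh ▸ hx)
              omega
            · omega
          · intro hx
            rcases List.mem_cons.1 ((hiff x).2 ⟨hx.1, by omega⟩) with rfl | hx'
            · omega
            · exact Or.inl hx'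
        apply main 1 (h - 1) (by omega) (by simp; omega) hiff'
        have hsum' : (tl ++ [1]).sum + h = (h :: tl).sum + 1 := by simp; omega
        have hidxle : (tl ++ [1]).idxOf ((tl ++ [1]).foldr max 0) ≤ ℓ := by
          have := List.idxOf_le_length (a := (tl ++ [1]).foldr max 0) (l := tl ++ [1])
          simp only [List.length_append, List.length_singleton] at this
          omega
        have hdist : (ℓ + 1) * ((tl ++ [1]).sum + 1) = (ℓ + 1) * (tl ++ [1]).sum + (ℓ + 1) := by
          ring
        have hmul : (ℓ + 1) * ((tl ++ [1]).sum + 1) ≤ (ℓ + 1) * (h :: tl).sum :=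
          Nat.mul_le_mul_left _ (by omega)
        omega
      · -- case 3 : rotate the head to the back
        have hiff' : ∀ x, x ∈ tl ++ [h] ↔ (1 ≤ x ∧ x ≤ k) := by
          intro x
          simp only [List.mem_append, List.mem_singleton]
          constructor
          · rintro (hx | rfl)
            · exact (hiff x).1 (by simp [hx])
            · exact hh1
          · intro hx
            rcases List.mem_cons.1 ((hiff x).2 hx) with rfl | hx'
            · exact Or.inr rfl
            · exact Or.inl hx'
        have maxw' : (tl ++ [h]).foldr max 0 = k := maxL_pattern (by omega) hiff'
        apply main h k (by omega) (Finset.mem_Icc.2 ⟨hh1.1, Finset.mem_Icc.1 (hmem h hhp) |>.2⟩) hiff'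
        rw [maxw']
        have hktl : k ∈ tl := by
          rcases List.mem_cons.1 hkp with hk | hk
          · omega
          · exact hk
        have hidx1 : (tl ++ [h]).idxOf k = tl.idxOf k := List.idxOf_append_of_mem hktl
        have hidx2 : (h :: tl).idxOf k = tl.idxOf k + 1 := by
          rw [List.idxOf_cons_ne _ hhk]
        have hsum' : (tl ++ [h]).sum = (h :: tl).sum := by simp; omega
        have hprod : (ℓ + 1) * (tl ++ [h]).sum = (ℓ + 1) * (h :: tl).sum := by rw [hsum']
        rw [hidx2] at hμ
        omega

lemma reach_ones (hm : 1 ≤ m) :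
    ∀ p ∈ patFinset ℓ m, ReflTransGen (RR ℓ m) p (List.replicate ℓ 1) := fun p hp =>
  reach_ones_aux hm _ p (le_refl _) hp

lemma mem_patFinset_reverse {p : List ℕ} (hp : p ∈ patFinset ℓ m) :
    p.reverse ∈ patFinset ℓ m := by
  obtain ⟨hlen, hmem, hpat⟩ := mem_patFinset.1 hp
  exact mem_patFinset.2 ⟨by simp [hlen], fun x hx => hmem x (by simpa using hx),
    pattern_of_mem_iff (fun x => (List.mem_reverse).symm) hpat⟩

lemma reach_from_ones (hm : 1 ≤ m) :
    ∀ p ∈ patFinset ℓ m, ReflTransGen (RR ℓ m) (List.replicate ℓ 1) p := by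
  intro p hp
  have h1 : ReflTransGen (RR ℓ m) p.reverse (List.replicate ℓ 1) :=
    reach_ones hm p.reverse (mem_patFinset_reverse hp)
  have h2 : ReflTransGen (fun x y : List ℕ => RR ℓ m x.reverse y.reverse) p
      (List.replicate ℓ 1) := by
    have := ReflTransGen.lift (r := RR ℓ m)
      (p := fun x y : List ℕ => RR ℓ m x.reverse y.reverse)
      (fun l : List ℕ => l.reverse) (fun a b hab => by simpa [Function.onFun] using hab) _ _ h1
    simpa [Function.onFun, List.reverse_replicate] using this
  have h3 : ReflTransGen (Function.swap (RR ℓ m)) p (List.replicate ℓ 1) := by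
    refine ReflTransGen.mono ?_ _ _ h2
    rintro x y ⟨hx, hy, hxy⟩
    refine ⟨?_, ?_, ?_⟩
    · have := mem_patFinset_reverse hy
      simpa using this
    · have := mem_patFinset_reverse hx
      simpa using this
    · rw [List.tail_reverse, List.dropLast_reverse] at hxy
      have := List.reverse_injective hxy
      exact this.symm
  exact Relation.reflTransGen_swap.1 h3

lemma pat_conn (hm : 1 ≤ m) :
    ∀ p ∈ patFinset ℓ m, ∀ q ∈ patFinset ℓ m, ReflTransGen (RR ℓ m) p q := by
  intro p hp q hq
  exact (reach_ones hm p hp).trans (reach_from_ones hm q hq)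



lemma headI_cons_tail (w : List ℕ) (h : w ≠ []) : w.headI :: w.tail = w := by
  cases w with
  | nil => exact absurd rfl h
  | cons a l => rfl

end Application

end Stmt13


open Stmt13 in
theorem stmt_13 (n m : ℕ) (hn : 2 ≤ n) (hm : 2 ≤ m) :
    -- C_p(n,m) ≥ Σ_{i=1}^{m} Σ_{a_1+⋯+a_i = n-1, a_t ≥ 1} (n-1)!/(a_1!⋯a_i!):
    -- there is a chord-free simple path of patterns of length n over [m],
    -- avoiding loops, with at least that many vertices (the number of
    -- patterns of length n-1 over [m])
    ∃ k : ℕ, ∃ v : Fin k → List ℕ,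
      (∀ i, (v i).length = n ∧ PatternOver m (v i)) ∧ Function.Injective v ∧
      (∀ i : Fin k, ∀ h : (i : ℕ) + 1 < k, Overlap (v i) (v ⟨(i : ℕ) + 1, h⟩)) ∧
      (∀ i j : Fin k, i ≤ j → ¬ Overlap (v j) (v i)) ∧
      (∑ i ∈ Finset.Icc 1 m,
        ∑ a ∈ (Finset.Nat.antidiagonalTuple i (n - 1)).filter
          (fun a => ∀ t, 1 ≤ a t),
          Nat.multinomial Finset.univ a) ≤ k := by
  classical
  set ℓ := n - 1 with hl
  have hl1 : 1 ≤ ℓ := by omega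
  have hnl : n = ℓ + 1 := by omega
  -- the special pattern e* and the extra word
  set estar : List ℕ := 1 :: List.replicate (ℓ - 1) 2 with hestar
  set repl2 : List ℕ := List.replicate ℓ 2 with hrepl2
  have hestarE : estar ∈ patFinset ℓ m := by
    rw [mem_patFinset]
    refine ⟨by simp [hestar]; omega, ?_, ?_⟩
    · intro x hx
      rcases List.mem_cons.1 hx with rfl | hx
      · simp; omega
      · rw [List.mem_replicate] at hx
        rw [hx.2]
        simp; omega
    · rcases Nat.eq_or_lt_of_le hl1 with h1 | h2
      · refine ⟨1, le_refl _, fun x => ?_⟩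
        rw [hestar, ← h1]
        simp
        omega
      · refine ⟨2, by omega, fun x => ?_⟩
        rw [hestar]
        simp only [List.mem_cons, List.mem_replicate]
        constructor
        · rintro (rfl | ⟨-, rfl⟩) <;> omega
        · intro hx
          rcases Nat.eq_or_lt_of_le hx.1 with h | h
          · exact Or.inl h.symm
          · exact Or.inr ⟨by omega, by omega⟩
  have hrepl2notE : repl2 ∉ patFinset ℓ m := by
    intro hE
    obtain ⟨-, -, k, hk1, hiff⟩ := mem_patFinset.1 hE
    have := (hiff 1).2 ⟨le_refl _, hk1⟩
    rw [hrepl2, List.mem_replicate] at this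
    omega
  -- Euler circuit
  obtain ⟨T, hTne, hTg, hTcl, hTfin⟩ := euler_circuit
    (s := fun p : List ℕ => p.dropLast) (t := fun p : List ℕ => p.tail) (patFinset ℓ m)
    ⟨estar, hestarE⟩ (fun v => pat_balance v)
    (fun e he f hf => pat_conn (by omega) e he f hf)
  -- rotate to end at estar
  have hestarT : estar ∈ T := by rw [← List.mem_toFinset, hTfin]; exact hestarE
  obtain ⟨A, B, rfl⟩ := List.append_of_mem hestarT
  have hg2 : Good (fun p : List ℕ => p.dropLast) (fun p : List ℕ => p.tail) (patFinset ℓ m) ((A ++ [estar]) ++ B) := by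
    rwa [List.append_assoc, List.singleton_append]
  have hcl2 : Closed (fun p : List ℕ => p.dropLast) (fun p : List ℕ => p.tail) ((A ++ [estar]) ++ B) := by
    rwa [List.append_assoc, List.singleton_append]
  obtain ⟨hgR, hclR⟩ := rotate_closed hg2 hcl2
  rw [← List.append_assoc] at hgR hclR
  set R : List (List ℕ) := (B ++ A) ++ [estar] with hR
  have hRfin : R.toFinset = patFinset ℓ m := by
    rw [← hTfin]
    ext x
    simp [hR]
    tauto
  have hRlen : R.length = (patFinset ℓ m).card := by
    rw [← hRfin, List.toFinset_card_of_nodup hgR.1]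
  -- the window list
  set P : ℕ := (patFinset ℓ m).card with hP
  set U : List (List ℕ) := R ++ [repl2] with hU
  have hUlen : U.length = P + 1 := by simp [hU, hRlen]
  have hUmem : ∀ w ∈ U, w.length = ℓ ∧ ∀ x ∈ w, x ∈ Finset.Icc 1 m := by
    intro w hw
    rcases List.mem_append.1 hw with hw | hw
    · have : w ∈ patFinset ℓ m := by rw [← hRfin]; exact List.mem_toFinset.2 hw
      obtain ⟨h1, h2, -⟩ := mem_patFinset.1 this
      exact ⟨h1, h2⟩
    · simp only [List.mem_singleton] at hw
      subst hw
      refine ⟨by simp [hrepl2], ?_⟩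
      intro x hx
      rw [hrepl2, List.mem_replicate] at hx
      rw [hx.2]
      simp
      omega
  have hUnodup : U.Nodup := by
    rw [hU, List.nodup_append]
    refine ⟨hgR.1, List.nodup_singleton _, ?_⟩
    intro x hx y hy hxy
    simp only [List.mem_singleton] at hy
    subst hy
    subst hxy
    apply hrepl2notE
    rw [← hRfin]
    exact List.mem_toFinset.2 hx
  have hUchain : U.Chain' (fun e f => e.tail = f.dropLast) := by
    rw [hU]
    unfold List.Chain'
    rw [List.isChain_append]
    refine ⟨hgR.2.2, List.isChain_singleton _, ?_⟩
    intro x hx y hy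
    rw [List.getLast?_eq_getLast (by simp [hR] : R ≠ [])] at hx
    simp only [Option.mem_def, Option.some.injEq, List.head?_cons] at hx hy
    subst hx; subst hy
    have hgl : R.getLast (by simp [hR]) = estar := List.getLast_append_singleton _
    rw [hgl]
    show (1 :: List.replicate (ℓ - 1) 2).tail = (List.replicate ℓ 2).dropLast
    have h2 : List.replicate ℓ 2 = List.replicate (ℓ - 1) 2 ++ [2] := by
      conv_lhs => rw [show ℓ = (ℓ - 1) + 1 from by omega]
      exact List.replicate_succ' (n := ℓ - 1) (a := 2)
    rw [h2, List.dropLast_concat]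
    rfl
  -- window access facts
  have hUne : ∀ (i : ℕ) (h : i < U.length), U.get ⟨i, h⟩ ≠ [] := by
    intro i h
    have := (hUmem _ (U.get_mem ⟨i, h⟩)).1
    intro hnil
    rw [hnil] at this
    simp at this
    omega
  have hupat : ∀ (i : ℕ) (h : i < P), U.get ⟨i, by omega⟩ ∈ patFinset ℓ m := by
    intro i h
    have hiR : i < R.length := by omega
    have : U.get ⟨i, by omega⟩ = R.get ⟨i, hiR⟩ := by simp only [List.get_eq_getElem]; exact List.getElem_append_left hiR
    rw [this, ← hRfin]
    exact List.mem_toFinset.2 (R.get_mem _)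
  have hchain_get : ∀ (i : ℕ) (h : i + 1 < U.length),
      (U.get ⟨i, by omega⟩).tail = (U.get ⟨i + 1, h⟩).dropLast := by
    intro i h
    exact List.isChain_iff_getElem.1 hUchain i (by omega)
  have hPU : ∀ i : Fin P, (i : ℕ) < U.length := by
    intro i; have := i.isLt; omega
  have hPU1 : ∀ i : Fin P, (i : ℕ) + 1 < U.length := by
    intro i; have := i.isLt; omega
  set v : Fin P → List ℕ :=
    fun i => (U.get ⟨(i : ℕ), hPU i⟩).headI :: U.get ⟨(i : ℕ) + 1, hPU1 i⟩ with hv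
  have hvform : ∀ i : Fin P,
      v i = U.get ⟨(i : ℕ), hPU i⟩ ++ [(U.get ⟨(i : ℕ) + 1, hPU1 i⟩).getLast (hUne _ _)] := by
    intro i
    have hsplit : (U.get ⟨(i : ℕ) + 1, hPU1 i⟩).dropLast ++
        [(U.get ⟨(i : ℕ) + 1, hPU1 i⟩).getLast (hUne _ _)] = U.get ⟨(i : ℕ) + 1, hPU1 i⟩ :=
      List.dropLast_append_getLast _
    simp only [hv]
    conv_lhs => rw [← hsplit]
    rw [← hchain_get (i : ℕ) (hPU1 i), ← List.cons_append,
      headI_cons_tail _ (hUne _ (hPU i))]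
  have hgetinj : ∀ (i j : ℕ) (hi : i < U.length) (hj : j < U.length),
      U.get ⟨i, hi⟩ = U.get ⟨j, hj⟩ → i = j := by
    intro i j hi hj hij
    have := (List.Nodup.get_inj_iff hUnodup).1 hij
    exact congrArg Fin.val this
  refine ⟨P, v, ?_, ?_, ?_, ?_, ?_⟩
  · -- length and pattern
    intro i
    have hlenvi : (v i).length = n := by
      rw [hv]
      simp only [List.length_cons]
      rw [(hUmem _ (U.get_mem ⟨_, hPU1 i⟩)).1]
      omega
    refine ⟨hlenvi, ?_⟩
    rcases Nat.lt_or_ge ((i : ℕ) + 1) P with hiP | hiP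
    · -- generic gluing case
      obtain ⟨hpat, hmem'⟩ := glue_pattern (hupat (i : ℕ) i.isLt) (hupat ((i : ℕ) + 1) hiP)
        (hchain_get (i : ℕ) (hPU1 i)) (hUne _ (hPU1 i))
      rw [hvform i]
      exact ⟨hpat, fun x hx => (Finset.mem_Icc.1 (hmem' x hx)).2⟩
    · -- last glue : estar with repl2
      have hiPeq : (i : ℕ) + 1 = P := by have := i.isLt; omega
      have hlastU : U.get ⟨(i : ℕ) + 1, hPU1 i⟩ = repl2 := by
        have h1 : U.getLast (by simp [hU]) = repl2 := List.getLast_append_singleton _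
        rw [← h1, List.getLast_eq_getElem]
        simp only [List.get_eq_getElem]
        congr 1
        omega
      have hestarIdx : U.get ⟨(i : ℕ), hPU i⟩ = estar := by
        have hiR : (i : ℕ) < R.length := by omega
        have h0 : U.get ⟨(i : ℕ), hPU i⟩ = R.get ⟨(i : ℕ), hiR⟩ := by simp only [List.get_eq_getElem]; exact List.getElem_append_left hiR
        have h1 : R.getLast (by simp [hR]) = estar := List.getLast_append_singleton _
        rw [h0, ← h1, List.getLast_eq_getElem]
        simp only [List.get_eq_getElem]
        congr 1
        omega
      simp only [hv]
      rw [hlastU, hestarIdx]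
      constructor
      · refine ⟨2, by omega, fun x => ?_⟩
        rw [hestar, hrepl2]
        simp only [List.headI_cons, List.mem_cons, List.mem_replicate]
        constructor
        · rintro (rfl | ⟨-, rfl⟩) <;> omega
        · intro hx
          rcases Nat.eq_or_lt_of_le hx.1 with h | h
          · exact Or.inl h.symm
          · exact Or.inr ⟨by omega, by omega⟩
      · intro x hx
        rw [hestar, hrepl2] at hx
        simp only [List.headI_cons, List.mem_cons, List.mem_replicate] at hx
        rcases hx with rfl | ⟨-, rfl⟩ <;> omega
  · -- injectivity
    intro i j hij
    simp only [hv] at hij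
    injection hij with h1 h2
    apply Fin.ext
    have := hgetinj _ _ (hPU1 i) (hPU1 j) h2
    omega
  · -- consecutive overlaps
    intro i h
    refine ⟨(U.get ⟨(i : ℕ), hPU i⟩).headI,
      (U.get ⟨(i : ℕ) + 1 + 1, hPU1 ⟨(i : ℕ) + 1, h⟩⟩).getLast (hUne _ _),
      U.get ⟨(i : ℕ) + 1, hPU1 i⟩, ?_, ?_⟩
    · rfl
    · have := hvform ⟨(i : ℕ) + 1, h⟩
      simp only at this
      rw [this]
  · -- no chords / loops
    rintro i j hij ⟨a, b, w, h1, h2⟩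
    simp only [hv] at h1
    injection h1 with h1a h1w
    rw [hvform i] at h2
    have hdl := congrArg List.dropLast h2
    rw [List.dropLast_concat, List.dropLast_concat] at hdl
    rw [← h1w] at hdl
    have := hgetinj _ _ (hPU i) (hPU1 j) hdl
    have hij' : (i : ℕ) ≤ (j : ℕ) := hij
    omega
  · -- the count
    exact le_trans (sum_le_card_patFinset ℓ m) (le_of_eq hP.symm)
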